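/- Let n ≥ 1 and let M and 𝒜 be as in the context. If z ∈ M and Log(z) lies in the frontier (topological boundary) of the amoeba 𝒜, then every coordinate zᵢ of z is a real number. (The part of the standard hyperplane lying over the boundary of its amoeba is contained in the real locus of the hyperplane.) -/

import Mathlib

open scoped BigOperators

/-- The logarithm map `Log(z) = (log |z₁|, …, log |zₙ|)`. -/
noncomputable def LogMap {n : ℕ} (z : Fin n → ℂ) : Fin n → ℝ :=
  fun i => Real.log ‖z i‖

/-- The standard hyperplane `{z ∈ (ℂ*)ⁿ : z₁ + ⋯ + zₙ = 1}`. -/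
def stdHyperplane (n : ℕ) : Set (Fin n → ℂ) :=
  {z | (∀ i, z i ≠ 0) ∧ ∑ i, z i = 1}

/-- The amoeba of the standard hyperplane. -/
noncomputable def stdAmoeba (n : ℕ) : Set (Fin n → ℝ) :=
  LogMap '' stdHyperplane n

lemma circle_inter (s : ℂ) (r₁ r₂ : ℝ) (h1 : 0 < r₁) (h2 : 0 < r₂)
    (hlo : |r₁ - r₂| ≤ ‖s‖) (hhi : ‖s‖ ≤ r₁ + r₂) :
    ∃ w₁ w₂ : ℂ, ‖w₁‖ = r₁ ∧ ‖w₂‖ = r₂ ∧ w₁ + w₂ = s := by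
  rcases eq_or_ne s 0 with rfl | hs
  · have hr : r₁ = r₂ := by
      have : |r₁ - r₂| ≤ 0 := by simpa using hlo
      have := abs_nonpos_iff.mp this
      linarith
    exact ⟨(r₁ : ℂ), -(r₁ : ℂ), by simp [abs_of_pos h1], by simp [abs_of_pos h1, hr.symm], by ring⟩
  · set d := ‖s‖ with hd
    have hd0 : 0 < d := norm_pos_iff.mpr hs
    have hA : r₁ - r₂ ≤ d := le_trans (le_abs_self _) hlo
    have hB : r₂ - r₁ ≤ d := le_trans (by rw [abs_sub_comm]; exact le_abs_self _) hlo
    set c : ℝ := (d ^ 2 + r₁ ^ 2 - r₂ ^ 2) / (2 * d * r₁) with hc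
    have hc1 : c ≤ 1 := by
      rw [hc, div_le_one (by positivity)]
      nlinarith [mul_nonneg (by linarith : (0:ℝ) ≤ r₂ - (d - r₁)) (by linarith : (0:ℝ) ≤ r₂ + (d - r₁))]
    have hc2 : -1 ≤ c := by
      rw [hc, le_div_iff₀ (by positivity)]
      nlinarith [mul_nonneg (by linarith : (0:ℝ) ≤ d + r₁ - r₂) (by linarith : (0:ℝ) ≤ d + r₁ + r₂)]
    have hcsq : 0 ≤ 1 - c ^ 2 := by nlinarith
    set t : ℝ := Real.sqrt (1 - c ^ 2) with htdef
    have ht : t ^ 2 = 1 - c ^ 2 := Real.sq_sqrt hcsq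
    have hkey : c * (2 * d * r₁) = d ^ 2 + r₁ ^ 2 - r₂ ^ 2 := by
      rw [hc]; field_simp
    set u₁ : ℂ := ⟨r₁ * c, r₁ * t⟩ with hu₁
    set u₂ : ℂ := ⟨d - r₁ * c, -(r₁ * t)⟩ with hu₂
    have habs1 : ‖u₁‖ = r₁ := by
      rw [Complex.norm_def, Complex.normSq_mk]
      have : r₁ * c * (r₁ * c) + r₁ * t * (r₁ * t) = r₁ ^ 2 := by linear_combination r₁ ^ 2 * ht
      rw [this]
      exact Real.sqrt_sq h1.le
    have habs2 : ‖u₂‖ = r₂ := by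
      rw [Complex.norm_def, Complex.normSq_mk]
      have : (d - r₁ * c) * (d - r₁ * c) + -(r₁ * t) * -(r₁ * t) = r₂ ^ 2 := by
        linear_combination r₁ ^ 2 * ht - hkey
      rw [this]
      exact Real.sqrt_sq h2.le
    have hsum : u₁ + u₂ = (d : ℂ) := by
      apply Complex.ext <;> simp [hu₁, hu₂]
    refine ⟨s / d * u₁, s / d * u₂, ?_, ?_, ?_⟩
    · rw [norm_mul, habs1, norm_div, Complex.norm_real, Real.norm_eq_abs, ← hd, abs_of_pos hd0,
        div_self hd0.ne', one_mul]
    · rw [norm_mul, habs2, norm_div, Complex.norm_real, Real.norm_eq_abs, ← hd, abs_of_pos hd0,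
        div_self hd0.ne', one_mul]
    · rw [← mul_add, hsum]
      have : (d : ℂ) ≠ 0 := Complex.ofReal_ne_zero.mpr hd0.ne'
      field_simp

/-- The part of the standard hyperplane lying over the boundary of its
amoeba is contained in the real locus of the hyperplane. -/
theorem statement7 (n : ℕ) (hn : 1 ≤ n) (z : Fin n → ℂ)
    (hz : z ∈ stdHyperplane n) (hfr : LogMap z ∈ frontier (stdAmoeba n)) :
    ∀ i, (z i).im = 0 := by
  obtain ⟨hz0, hz1⟩ := hz
  by_contra hcon
  push_neg at hcon
  obtain ⟨i0, hi0⟩ := hcon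
  -- find j with (conj (z i0) * z j).im ≠ 0
  obtain ⟨j, hjim⟩ : ∃ j, ((starRingEnd ℂ) (z i0) * z j).im ≠ 0 := by
    by_contra h
    push_neg at h
    have e1 : (starRingEnd ℂ) (z i0) = ∑ k, (starRingEnd ℂ) (z i0) * z k := by
      rw [← Finset.mul_sum, hz1, mul_one]
    have e2 : ((starRingEnd ℂ) (z i0)).im = 0 := by
      rw [e1, Complex.im_sum]
      exact Finset.sum_eq_zero fun k _ => h k
    rw [Complex.conj_im, neg_eq_zero] at e2
    exact hi0 e2
  have hjk : j ≠ i0 := by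
    rintro rfl
    rw [← Complex.normSq_eq_conj_mul_self] at hjim
    simp at hjim
  -- positivity of moduli
  have hpa : 0 < ‖z j‖ := norm_pos_iff.mpr (hz0 j)
  have hpb : 0 < ‖z i0‖ := norm_pos_iff.mpr (hz0 i0)
  -- strict triangle inequalities
  have hare : |((starRingEnd ℂ) (z i0) * z j).re| < ‖z i0‖ * ‖z j‖ := by
    have h := Complex.abs_re_lt_norm.mpr hjim
    rwa [norm_mul, Complex.norm_conj] at h
  have hre : (z j * (starRingEnd ℂ) (z i0)).re = ((starRingEnd ℂ) (z i0) * z j).re := by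
    rw [mul_comm]
  have hns : Complex.normSq (z j + z i0)
      = Complex.normSq (z j) + Complex.normSq (z i0) + 2 * ((starRingEnd ℂ) (z i0) * z j).re := by
    rw [Complex.normSq_add, hre]
  have h1 : ‖z j + z i0‖ < ‖z j‖ + ‖z i0‖ := by
    have hlt : ‖z j + z i0‖ ^ 2 < (‖z j‖ + ‖z i0‖) ^ 2 := by
      rw [Complex.sq_norm, hns]
      have := abs_lt.mp hare
      nlinarith [Complex.sq_norm (z j), Complex.sq_norm (z i0)]
    exact lt_of_pow_lt_pow_left₀ 2 (by positivity) hlt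
  have h2 : |‖z j‖ - ‖z i0‖| < ‖z j + z i0‖ := by
    have hlt : |‖z j‖ - ‖z i0‖| ^ 2 < ‖z j + z i0‖ ^ 2 := by
      rw [sq_abs, Complex.sq_norm, hns]
      have := abs_lt.mp hare
      nlinarith [Complex.sq_norm (z j), Complex.sq_norm (z i0)]
    exact lt_of_pow_lt_pow_left₀ 2 (norm_nonneg _) hlt
  -- the local parametrization
  set S : Finset (Fin n) := (Finset.univ.erase j).erase i0 with hS
  set g : (Fin n → ℝ) → ℂ :=
    fun x => 1 - ∑ i ∈ S, (Real.exp (x i) : ℂ) * (z i / (‖z i‖ : ℂ)) with hg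
  have tEq : ∀ i, (Real.exp (LogMap z i) : ℂ) * (z i / (‖z i‖ : ℂ)) = z i := by
    intro i
    rw [LogMap, Real.exp_log (norm_pos_iff.mpr (hz0 i)), mul_comm,
      div_mul_cancel₀ _ (by exact_mod_cast (norm_pos_iff.mpr (hz0 i)).ne')]
  have hsplit : z j + (z i0 + ∑ i ∈ S, z i) = 1 := by
    rw [hS, Finset.add_sum_erase _ _ (Finset.mem_erase.mpr ⟨Ne.symm hjk, Finset.mem_univ _⟩),
      Finset.add_sum_erase _ _ (Finset.mem_univ j)]
    exact hz1
  have gx0 : g (LogMap z) = z j + z i0 := by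
    rw [hg]
    simp only
    rw [Finset.sum_congr rfl fun i _ => tEq i]
    linear_combination -hsplit
  have hgc : Continuous g := by
    apply continuous_const.sub
    apply continuous_finset_sum
    intro i _
    exact (Complex.continuous_ofReal.comp (Real.continuous_exp.comp (continuous_apply i))).mul
      continuous_const
  set U : Set (Fin n → ℝ) :=
    {x | |Real.exp (x j) - Real.exp (x i0)| < ‖g x‖} ∩
    {x | ‖g x‖ < Real.exp (x j) + Real.exp (x i0)} with hU
  have hUopen : IsOpen U := by
    have cjk : Continuous fun x : Fin n → ℝ => Real.exp (x j) :=
      Real.continuous_exp.comp (continuous_apply j)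
    have ci0 : Continuous fun x : Fin n → ℝ => Real.exp (x i0) :=
      Real.continuous_exp.comp (continuous_apply i0)
    have cg : Continuous fun x => ‖g x‖ := continuous_norm.comp hgc
    exact (isOpen_lt (continuous_abs.comp (cjk.sub ci0)) cg).inter
      (isOpen_lt cg (cjk.add ci0))
  have hexpj : Real.exp (LogMap z j) = ‖z j‖ := Real.exp_log hpa
  have hexpi : Real.exp (LogMap z i0) = ‖z i0‖ := Real.exp_log hpb
  have hx0 : LogMap z ∈ U := by
    constructor
    · simp only [Set.mem_setOf_eq, gx0, hexpj, hexpi]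
      exact h2
    · simp only [Set.mem_setOf_eq, gx0, hexpj, hexpi]
      exact h1
  have hUsub : U ⊆ stdAmoeba n := by
    rintro x ⟨hxl, hxr⟩
    obtain ⟨w₁, w₂, hw1, hw2, hw12⟩ := circle_inter (g x) (Real.exp (x j)) (Real.exp (x i0))
      (Real.exp_pos _) (Real.exp_pos _) (le_of_lt hxl) (le_of_lt hxr)
    set w : Fin n → ℂ := fun i => if i = j then w₁ else if i = i0 then w₂
      else (Real.exp (x i) : ℂ) * (z i / (‖z i‖ : ℂ)) with hwdef
    have habsw : ∀ i, ‖w i‖ = Real.exp (x i) := by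
      intro i
      by_cases hij : i = j
      · subst hij; simp only [hwdef, if_pos rfl]; exact hw1
      by_cases hii : i = i0
      · subst hii; simp only [hwdef, if_neg hij, if_pos rfl]; exact hw2
      · simp only [hwdef, if_neg hij, if_neg hii]
        rw [norm_mul, norm_div, Complex.norm_real, Complex.norm_real, Real.norm_eq_abs, Real.norm_eq_abs,
          abs_of_pos (Real.exp_pos _), abs_of_nonneg (norm_nonneg _),
          div_self (norm_ne_zero_iff.mpr (hz0 i)), mul_one]
    refine ⟨w, ⟨fun i hwi => ?_, ?_⟩, ?_⟩
    · have := habsw i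
      rw [hwi, norm_zero] at this
      exact absurd this.symm (Real.exp_pos _).ne'
    · have hSmem : ∀ i ∈ S, w i = (Real.exp (x i) : ℂ) * (z i / (‖z i‖ : ℂ)) := by
        intro i hi
        rw [hS, Finset.mem_erase, Finset.mem_erase] at hi
        simp only [hwdef, if_neg hi.2.1, if_neg hi.1]
      have hsplitw : ∑ i, w i = w j + (w i0 + ∑ i ∈ S, w i) := by
        rw [hS, Finset.add_sum_erase _ _ (Finset.mem_erase.mpr ⟨Ne.symm hjk, Finset.mem_univ _⟩),
          Finset.add_sum_erase _ _ (Finset.mem_univ j)]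
      rw [hsplitw, Finset.sum_congr rfl hSmem]
      have hwj : w j = w₁ := by simp only [hwdef, if_pos rfl]
      have hwi0 : w i0 = w₂ := by simp only [hwdef, if_neg (Ne.symm hjk)]; simp
      rw [hwj, hwi0]
      rw [hg] at hw12
      linear_combination hw12
    · funext i
      rw [LogMap, habsw i, Real.log_exp]
  have hint : LogMap z ∈ interior (stdAmoeba n) :=
    mem_interior.mpr ⟨U, hUsub, hUopen, hx0⟩
  rw [frontier] at hfr
  exact hfr.2 hint
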